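/- Let S be a pomonoid and I a proper right ideal of S. Then the amalgamated coproduct A(I) = S ⊔_I S of two copies of S over I is a generator in the category Pos-S; equivalently, S is a retract of A(I): there exist S-poset morphisms q : S → A(I) and f : A(I) → S with f ∘ q = id_S. -/

import Mathlib

open scoped Classical

/-- The carrier of the amalgamated coproduct `A(I) = S ⊔_I S`: pairs `(w, u)`
with label `w ∈ {x, y, z} = Fin 3` (`2` playing the role of `z`), where the
label is `z` exactly when `u ∈ I`. -/
def AICarrier (S : Type) (I : Set S) : Type :=
  {p : Fin 3 × S // p.2 ∈ I ↔ p.1 = 2}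

/-- The right `S`-action on `A(I)`. -/
noncomputable def AIact {S : Type} [Monoid S] (I : Set S)
    (hI : ∀ i ∈ I, ∀ s : S, i * s ∈ I)
    (p : AICarrier S I) (s : S) : AICarrier S I :=
  if h : p.1.2 * s ∈ I then ⟨(2, p.1.2 * s), by simp [h]⟩
  else
    ⟨(p.1.1, p.1.2 * s), by
      constructor
      · intro hc; exact absurd hc h
      · intro hl; exact absurd (hI _ (p.2.mpr hl) s) h⟩

/-- The order on `A(I)`:
`(w₁,s) ≤ (w₂,t)` iff (`w₁ = w₂` and `s ≤ t`) or (`w₁ ≠ w₂` and `s ≤ i ≤ t` for some `i ∈ I`). -/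
def AIle {S : Type} [PartialOrder S] (I : Set S) (p q : AICarrier S I) : Prop :=
  (p.1.1 = q.1.1 ∧ p.1.2 ≤ q.1.2) ∨
    (p.1.1 ≠ q.1.1 ∧ ∃ i ∈ I, p.1.2 ≤ i ∧ i ≤ q.1.2)

/-- for a proper right ideal `I` of a pomonoid `S`, the amalgamated
coproduct `A(I)` is a generator in `Pos`-`S`: `S` is a retract of `A(I)`, i.e.
there are `S`-poset morphisms `q : S → A(I)` and `f : A(I) → S` with `f ∘ q = id`. -/
theorem AI_is_generator
    {S : Type} [Monoid S] [PartialOrder S]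
    [CovariantClass S S (· * ·) (· ≤ ·)]
    [CovariantClass S S (Function.swap (· * ·)) (· ≤ ·)]
    (I : Set S) (hne : I.Nonempty) (hproper : I ≠ Set.univ)
    (hI : ∀ i ∈ I, ∀ s : S, i * s ∈ I) :
    ∃ (q : S → AICarrier S I) (f : AICarrier S I → S),
      (∀ s t : S, s ≤ t → AIle I (q s) (q t)) ∧
      (∀ s t : S, q (s * t) = AIact I hI (q s) t) ∧
      (∀ p p' : AICarrier S I, AIle I p p' → f p ≤ f p') ∧
      (∀ (p : AICarrier S I) (t : S), f (AIact I hI p t) = f p * t) ∧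
      (∀ s : S, f (q s) = s) := by

  refine ⟨fun s => if h : s ∈ I then ⟨(2, s), by simp [h]⟩
      else ⟨(0, s), by simp [h]⟩,
    fun p => p.1.2, ?_, ?_, ?_, ?_, ?_⟩
  · intro s t hst
    dsimp only
    by_cases hs : s ∈ I <;> by_cases ht : t ∈ I
    · erw [dif_pos hs, dif_pos ht]; exact Or.inl ⟨rfl, hst⟩
    · erw [dif_pos hs, dif_neg ht]; exact Or.inr ⟨by simp, s, hs, le_refl s, hst⟩
    · erw [dif_neg hs, dif_pos ht]; exact Or.inr ⟨by simp, t, ht, hst, le_refl t⟩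
    · erw [dif_neg hs, dif_neg ht]; exact Or.inl ⟨rfl, hst⟩
  · intro s t
    by_cases hst : s * t ∈ I
    · by_cases hs : s ∈ I <;>
        simp [AIact, hs, hst] <;> rfl
    · have hs : s ∉ I := fun h => hst (hI s h t)
      simp [AIact, hs, hst] <;> rfl
  · intro p p' h
    rcases h with ⟨_, h⟩ | ⟨_, i, _, h1, h2⟩
    · exact h
    · exact h1.trans h2
  · intro p t
    by_cases h : p.1.2 * t ∈ I <;> simp [AIact, h]
  · intro s
    by_cases hs : s ∈ I <;> simp [hs]
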